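/- Let γ ∈ (0,1] and α ≥ 0. Let s, x, y, u, v : (0,∞) → ℝ be continuous, with s(r) > 0 for all r, y and v differentiable, and r ↦ r u(r)(γ s(r)² + 4α v(r)²) differentiable, satisfying on (0,∞) the equations (U): v' y − v y' + (2y² + (γ/2) s² + 2v²) u = 0 and (I): (r u (γ s² + 4α v²))' + 2r (γ x s² + 4α y u²) v = 0. Assume: there exists R > 0 with x(r) y(r) > 0 for all r ≥ R; u and v are not both identically zero; and, in case y has no zero on (0,∞), the function Φ(r) := r u v (γ s² + 4α v²)/y tends to 0 as r → 0⁺ and as r → ∞, Φ' is integrable on (0,∞), and the functions r ↦ 2r{[1 + (v² + (γ/4)s²)/y²](γ s² + 4α v²) + 4α v²} u² and r ↦ 2r (x/y) γ s² v² are integrable on (0,∞). Then there exists r₀ ∈ (0,∞) with x(r₀) y(r₀) = 0. -/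

import Mathlib

open Set Filter MeasureTheory Topology Real

set_option maxHeartbeats 1000000 in
/-- Theorem 1 of the paper: any solution of the field equations (U), (I) with
nonvanishing W fields `u, v` must be such that the product `y·x` has at least one zero
in the open interval `(0,∞)`. -/
theorem statement5 (γ α : ℝ) (hγ : γ ∈ Set.Ioc (0:ℝ) 1) (hα : 0 ≤ α)
    (s x y u v y' v' U' : ℝ → ℝ)
    (hs : ContinuousOn s (Set.Ioi (0:ℝ)))
    (hx : ContinuousOn x (Set.Ioi (0:ℝ)))
    (hyc : ContinuousOn y (Set.Ioi (0:ℝ)))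
    (huc : ContinuousOn u (Set.Ioi (0:ℝ)))
    (hvc : ContinuousOn v (Set.Ioi (0:ℝ)))
    (hspos : ∀ r : ℝ, 0 < r → 0 < s r)
    (hy : ∀ r ∈ Set.Ioi (0:ℝ), HasDerivAt y (y' r) r)
    (hv : ∀ r ∈ Set.Ioi (0:ℝ), HasDerivAt v (v' r) r)
    (hUd : ∀ r ∈ Set.Ioi (0:ℝ),
      HasDerivAt (fun t => t * u t * (γ * s t ^ 2 + 4 * α * v t ^ 2)) (U' r) r)
    (hUeq : ∀ r ∈ Set.Ioi (0:ℝ),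
      v' r * y r - v r * y' r
        + (2 * y r ^ 2 + γ / 2 * s r ^ 2 + 2 * v r ^ 2) * u r = 0)
    (hIeq : ∀ r ∈ Set.Ioi (0:ℝ),
      U' r + 2 * r * (γ * x r * s r ^ 2 + 4 * α * y r * u r ^ 2) * v r = 0)
    (hfar : ∃ R : ℝ, 0 < R ∧ ∀ r : ℝ, R ≤ r → 0 < x r * y r)
    (hnontriv : ∃ r : ℝ, 0 < r ∧ (u r ≠ 0 ∨ v r ≠ 0))
    (hcond : (∀ r : ℝ, 0 < r → y r ≠ 0) →
      (Filter.Tendsto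
          (fun r => r * u r * v r * (γ * s r ^ 2 + 4 * α * v r ^ 2) / y r)
          (nhdsWithin 0 (Set.Ioi 0)) (nhds 0)
        ∧ Filter.Tendsto
          (fun r => r * u r * v r * (γ * s r ^ 2 + 4 * α * v r ^ 2) / y r)
          Filter.atTop (nhds 0)
        ∧ MeasureTheory.IntegrableOn
          (deriv (fun r => r * u r * v r * (γ * s r ^ 2 + 4 * α * v r ^ 2) / y r))
          (Set.Ioi 0)
        ∧ MeasureTheory.IntegrableOn
          (fun r => 2 * r * ((1 + (v r ^ 2 + γ / 4 * s r ^ 2) / y r ^ 2)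
              * (γ * s r ^ 2 + 4 * α * v r ^ 2) + 4 * α * v r ^ 2) * u r ^ 2)
          (Set.Ioi 0)
        ∧ MeasureTheory.IntegrableOn
          (fun r => 2 * r * (x r / y r) * γ * s r ^ 2 * v r ^ 2) (Set.Ioi 0))) :
    ∃ r₀ : ℝ, 0 < r₀ ∧ x r₀ * y r₀ = 0 := by
  by_contra hcon
  push_neg at hcon
  obtain ⟨R, hRpos, hRfar⟩ := hfar
  -- x*y is positive everywhere on (0,∞)
  have hxy : ∀ r : ℝ, 0 < r → 0 < x r * y r := by
    intro r hr
    rcases lt_trichotomy (x r * y r) 0 with hlt | heq | hgt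
    · exfalso
      have hsub : Set.uIcc r R ⊆ Set.Ioi (0:ℝ) := fun t ht =>
        lt_of_lt_of_le (lt_min hr hRpos) ht.1
      have pcont : ContinuousOn (fun t => x t * y t) (Set.uIcc r R) :=
        (hx.mono hsub).mul (hyc.mono hsub)
      have h0mem : (0:ℝ) ∈ Set.uIcc (x r * y r) (x R * y R) :=
        Set.mem_uIcc.mpr (Or.inl ⟨hlt.le, (hRfar R le_rfl).le⟩)
      obtain ⟨c, hc, hceq⟩ := intermediate_value_uIcc pcont h0mem
      exact hcon c (hsub hc) hceq
    · exact absurd heq (hcon r hr)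
    · exact hgt
  have hy0 : ∀ r : ℝ, 0 < r → y r ≠ 0 := by
    intro r hr hy0
    have := hxy r hr
    rw [hy0, mul_zero] at this
    exact lt_irrefl 0 this
  obtain ⟨h0, hinf, _, hfint, hgint⟩ := hcond hy0
  set Φ : ℝ → ℝ := fun r => r * u r * v r * (γ * s r ^ 2 + 4 * α * v r ^ 2) / y r
    with hΦdef
  set F : ℝ → ℝ := fun r =>
    2 * r * ((1 + (v r ^ 2 + γ / 4 * s r ^ 2) / y r ^ 2)
        * (γ * s r ^ 2 + 4 * α * v r ^ 2) + 4 * α * v r ^ 2) * u r ^ 2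
      + 2 * r * (x r / y r) * γ * s r ^ 2 * v r ^ 2 with hFdef
  have hFint : MeasureTheory.IntegrableOn F (Set.Ioi 0) := hfint.add hgint
  -- Φ has derivative -(F r) on (0,∞)
  have hderiv : ∀ r ∈ Set.Ioi (0:ℝ), HasDerivAt Φ (-(F r)) r := by
    intro r hr
    have hr' : (0:ℝ) < r := hr
    have hyne := hy0 r hr'
    have h1 : HasDerivAt
        (fun t => (t * u t * (γ * s t ^ 2 + 4 * α * v t ^ 2)) * (v t / y t))
        (U' r * (v r / y r)
          + (r * u r * (γ * s r ^ 2 + 4 * α * v r ^ 2))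
            * ((v' r * y r - v r * y' r) / y r ^ 2)) r :=
      (hUd r hr).mul ((hv r hr).div (hy r hr) hyne)
    have heq : (fun t => (t * u t * (γ * s t ^ 2 + 4 * α * v t ^ 2)) * (v t / y t)) = Φ := by
      funext t
      rw [hΦdef]
      ring
    rw [heq] at h1
    have e1 : v' r * y r - v r * y' r
        = -((2 * y r ^ 2 + γ / 2 * s r ^ 2 + 2 * v r ^ 2) * u r) := by
      linarith [hUeq r hr]
    have e2 : U' r = -(2 * r * (γ * x r * s r ^ 2 + 4 * α * y r * u r ^ 2) * v r) := by
      linarith [hIeq r hr]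
    rw [e1, e2] at h1
    convert h1 using 1
    rw [hFdef]
    field_simp
    ring
  -- FTC on (0,∞) with vanishing boundary limits
  set G : ℝ → ℝ := Function.update Φ 0 0 with hGdef
  have hGcont : ContinuousWithinAt G (Set.Ici 0) 0 := by
    apply continuousWithinAt_update_same.mpr
    rwa [Set.Ici_sdiff_left]
  have hGderiv : ∀ t ∈ Set.Ioi (0:ℝ), HasDerivAt G (-(F t)) t := by
    intro t ht
    apply (hderiv t ht).congr_of_eventuallyEq
    filter_upwards [eventually_ne_nhds (ne_of_gt ht)] with z hz
    exact Function.update_of_ne hz 0 Φ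
  have hGtop : Filter.Tendsto G Filter.atTop (nhds 0) := by
    apply hinf.congr'
    filter_upwards [eventually_ne_atTop (0:ℝ)] with z hz
    exact (Function.update_of_ne hz 0 Φ).symm
  have hkey : ∫ t in Set.Ioi (0:ℝ), -(F t) = 0 - G 0 :=
    MeasureTheory.integral_Ioi_of_hasDerivAt_of_tendsto hGcont hGderiv hFint.neg hGtop
  have hG0 : G 0 = 0 := Function.update_self 0 0 Φ
  have hintF : ∫ t in Set.Ioi (0:ℝ), F t = 0 := by
    have : -∫ t in Set.Ioi (0:ℝ), F t = 0 := by
      rw [← MeasureTheory.integral_neg, hkey, hG0, sub_zero]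
    linarith
  -- A division-free-ish minorant m of F
  set m : ℝ → ℝ := fun r =>
    2 * r * γ * s r ^ 2 * u r ^ 2 + 2 * r * (x r / y r) * γ * s r ^ 2 * v r ^ 2 with hmdef
  have hq : ∀ r : ℝ, 0 < r → 0 < x r / y r := by
    intro r hr
    have hyn := hy0 r hr
    have hy2 : 0 < y r ^ 2 := pow_two_pos_of_ne_zero hyn
    have : x r / y r = x r * y r / y r ^ 2 := by
      field_simp
    rw [this]
    exact div_pos (hxy r hr) hy2
  have hA : ∀ r : ℝ, 0 < r → 0 ≤ (v r ^ 2 + γ / 4 * s r ^ 2) / y r ^ 2 := by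
    intro r hr
    apply div_nonneg _ (sq_nonneg _)
    have := hγ.1
    nlinarith [sq_nonneg (v r), sq_nonneg (s r)]
  have hmF : ∀ r : ℝ, 0 < r → m r ≤ F r := by
    intro r hr
    rw [hmdef, hFdef]
    have hA' := hA r hr
    have hK : 0 ≤ 4 * α * v r ^ 2 := by positivity
    have hK2 : (0:ℝ) ≤ γ * s r ^ 2 + 4 * α * v r ^ 2 := by
      have := hγ.1
      nlinarith [sq_nonneg (s r)]
    have h2r : (0:ℝ) ≤ 2 * r := by linarith
    have hbr : γ * s r ^ 2
        ≤ (1 + (v r ^ 2 + γ / 4 * s r ^ 2) / y r ^ 2)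
            * (γ * s r ^ 2 + 4 * α * v r ^ 2) + 4 * α * v r ^ 2 := by
      nlinarith
    have := mul_le_mul_of_nonneg_right
      (mul_le_mul_of_nonneg_left hbr h2r) (sq_nonneg (u r))
    simp only
    nlinarith [this]
  have hFnn : ∀ r : ℝ, 0 < r → 0 ≤ F r := by
    intro r hr
    refine le_trans ?_ (hmF r hr)
    rw [hmdef]
    have hq' := (hq r hr).le
    have := hγ.1
    have h1 : (0:ℝ) ≤ 2 * r * γ * s r ^ 2 * u r ^ 2 := by positivity
    have h2 : (0:ℝ) ≤ 2 * r * (x r / y r) * γ * s r ^ 2 * v r ^ 2 := by positivity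
    simp only
    linarith
  -- the nontriviality point
  obtain ⟨r₁, hr₁, hcase⟩ := hnontriv
  have hr₁' : r₁ ∈ Set.Ioi (0:ℝ) := hr₁
  have hmpos : 0 < m r₁ := by
    rw [hmdef]
    have hsp := hspos r₁ hr₁
    have hqp := hq r₁ hr₁
    have hg := hγ.1
    have h1 : (0:ℝ) ≤ 2 * r₁ * γ * s r₁ ^ 2 * u r₁ ^ 2 := by positivity
    have h2 : (0:ℝ) ≤ 2 * r₁ * (x r₁ / y r₁) * γ * s r₁ ^ 2 * v r₁ ^ 2 := by positivity
    rcases hcase with hu | hv0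
    · have : (0:ℝ) < 2 * r₁ * γ * s r₁ ^ 2 * u r₁ ^ 2 := by positivity
      simp only
      linarith
    · have : (0:ℝ) < 2 * r₁ * (x r₁ / y r₁) * γ * s r₁ ^ 2 * v r₁ ^ 2 := by positivity
      simp only
      linarith
  -- continuity of m at r₁
  have hmem := isOpen_Ioi.mem_nhds hr₁'
  have cs := hs.continuousAt hmem
  have cx := hx.continuousAt hmem
  have cy := hyc.continuousAt hmem
  have cu := huc.continuousAt hmem
  have cv := hvc.continuousAt hmem
  have hyn₁ : y r₁ ≠ 0 := hy0 r₁ hr₁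
  have hmcont : ContinuousAt m r₁ := by
    rw [hmdef]
    fun_prop (disch := assumption)
  -- find an interval where F is bounded below by m r₁ / 2
  have hev : ∀ᶠ t in nhds r₁, m r₁ / 2 < m t :=
    hmcont.eventually (eventually_gt_nhds (half_lt_self hmpos))
  obtain ⟨ε, hε, hball⟩ := Metric.eventually_nhds_iff.mp hev
  set δ : ℝ := min ε r₁ with hδdef
  have hδpos : 0 < δ := lt_min hε hr₁
  set a : ℝ := r₁ - δ / 2 with hadef
  set b : ℝ := r₁ + δ / 2 with hbdef
  have hapos : 0 < a := by
    have : δ ≤ r₁ := min_le_right _ _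
    rw [hadef]
    linarith
  have hab : a < b := by rw [hadef, hbdef]; linarith
  have hsubIoi : Set.Ioo a b ⊆ Set.Ioi (0:ℝ) := fun t ht => lt_trans hapos ht.1
  have hlow : ∀ t ∈ Set.Ioo a b, m r₁ / 2 ≤ F t := by
    intro t ht
    have htpos : 0 < t := hsubIoi ht
    have hd : dist t r₁ < ε := by
      rw [Real.dist_eq]
      have h1 := ht.1
      have h2 := ht.2
      have : δ ≤ ε := min_le_left _ _
      rw [hadef] at h1; rw [hbdef] at h2
      rw [abs_lt]
      constructor <;> linarith
    exact le_trans (hball hd).le (hmF t htpos)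
  have hIoofin : MeasureTheory.volume (Set.Ioo a b) ≠ ⊤ :=
    (measure_Ioo_lt_top).ne
  have hFintIoo : MeasureTheory.IntegrableOn F (Set.Ioo a b) :=
    hFint.mono_set hsubIoi
  have hge : m r₁ / 2 * (MeasureTheory.volume (Set.Ioo a b)).toReal
      ≤ ∫ t in Set.Ioo a b, F t :=
    by have h := MeasureTheory.setIntegral_ge_of_const_le measurableSet_Ioo hIoofin hlow hFintIoo; rw [smul_eq_mul, mul_comm] at h; exact h
  have hvol : (MeasureTheory.volume (Set.Ioo a b)).toReal = b - a := by
    rw [Real.volume_Ioo, ENNReal.toReal_ofReal (by linarith)]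
  have hpos : 0 < ∫ t in Set.Ioo a b, F t := by
    refine lt_of_lt_of_le ?_ hge
    rw [hvol]
    have : 0 < b - a := by linarith
    positivity
  have hmono : ∫ t in Set.Ioo a b, F t ≤ ∫ t in Set.Ioi (0:ℝ), F t := by
    apply MeasureTheory.setIntegral_mono_set hFint
    · exact (MeasureTheory.ae_restrict_iff' measurableSet_Ioi).mpr
        (MeasureTheory.ae_of_all _ fun t ht => hFnn t ht)
    · exact HasSubset.Subset.eventuallyLE hsubIoi
  rw [hintF] at hmono
  linarith
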